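/- arXiv:2412.07120 — 2 statements merged into one kernel-verified Lean document; each statement's English description precedes it below -/
import Mathlib

section
/- Let d ≥ 2, let η^(1) ≥ η^(2) ≥ ⋯ ≥ η^(T+1) > 0 be a nonincreasing sequence, let ℓ^(1),…,ℓ^(T), m^(1),…,m^(T+1) ∈ ℝ^d, and for each t = 1,…,T+1 let x^(t) be a minimizer over Δ_d of x ↦ ⟨x, m^(t) + Σ_{s=1}^{t−1} ℓ^(s)⟩ − H(x)/η^(t), where H(x) = Σ_k x(k) log(1/x(k)) is the Shannon entropy. Then for every x* ∈ Δ_d: Σ_{t=1}^T ⟨x^(t) − x*, ℓ^(t)⟩ ≤ (log d)/η^(T+1) + Σ_{t=1}^T η^(t) ‖ℓ^(t) − m^(t)‖_∞² − Σ_{t=1}^T (1/(4η^(t))) ‖x^(t) − x^(t+1)‖_1² + 2‖m^(T+1)‖_∞. -/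
open Finset

noncomputable section

/-- The `(d-1)`-dimensional probability simplex in `ℝ^d`. -/
def simplex (d : ℕ) : Set (Fin d → ℝ) :=
  {x | (∀ k, 0 ≤ x k) ∧ ∑ k, x k = 1}

/-- Standard inner product on `ℝ^d`. -/
def inp {d : ℕ} (u v : Fin d → ℝ) : ℝ := ∑ k, u k * v k

/-- `ℓ¹` norm. -/
def l1 {d : ℕ} (v : Fin d → ℝ) : ℝ := ∑ k, |v k|

/-- `ℓ∞` norm. -/
def linf {d : ℕ} (v : Fin d → ℝ) : ℝ := ⨆ k, |v k|

/-- Matrix-vector product `A y`. -/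
def mvec {d e : ℕ} (A : Fin d → Fin e → ℝ) (v : Fin e → ℝ) : Fin d → ℝ :=
  fun i => ∑ j, A i j * v j

/-- Transposed matrix-vector product `Aᵀ x`. -/
def tvec {d e : ℕ} (A : Fin d → Fin e → ℝ) (v : Fin d → ℝ) : Fin e → ℝ :=
  fun j => ∑ i, A i j * v i

/-- Row-stochastic matrices. -/
def rowStoch {m : ℕ} (M : Fin m → Fin m → ℝ) : Prop :=
  ∀ a, M a ∈ simplex m

/-- Shannon entropy. -/
def shannonH {d : ℕ} (x : Fin d → ℝ) : ℝ := ∑ k, x k * Real.log (1 / x k)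

/-- Log-barrier regularizer. -/
def logBarrier {d : ℕ} (x : Fin d → ℝ) : ℝ := -∑ k, Real.log (x k)

/-- Local norm `‖h‖_{x,φ}` induced by the Hessian of the log-barrier at `x`. -/
def locNorm {d : ℕ} (x h : Fin d → ℝ) : ℝ := Real.sqrt (∑ k, (h k) ^ 2 / (x k) ^ 2)

/-- Dual local norm `‖h‖_{*,x,φ}` for the log-barrier at `x`. -/
def dualLocNorm {d : ℕ} (x h : Fin d → ℝ) : ℝ := Real.sqrt (∑ k, (x k) ^ 2 * (h k) ^ 2)

/-- `log₊ z = max (log z) 4`. -/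
def logp (z : ℕ) : ℝ := max (Real.log z) 4

section RVUAux
open Set


noncomputable def hfun : ℝ → ℝ := fun t => t * Real.log t - t + 1 - (3/2) * (t-1)^2 / (t+2)
noncomputable def hfun' : ℝ → ℝ := fun t => Real.log t - (3/2) * ((t-1)*(t+5)) / (t+2)^2
noncomputable def hfun'' : ℝ → ℝ := fun t => 1/t - 27 / (t+2)^3

lemma hasDeriv_hfun {t : ℝ} (ht : 0 < t) : HasDerivAt hfun (hfun' t) t := by
  have h2 : t + 2 ≠ 0 := by linarith
  have h1 : HasDerivAt (fun t : ℝ => t * Real.log t) (Real.log t + 1) t :=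
    Real.hasDerivAt_mul_log (ne_of_gt ht)
  have hnum : HasDerivAt (fun t : ℝ => (3/2) * (t-1)^2) (3 * (t-1)) t := by
    have : HasDerivAt (fun t : ℝ => (t-1)^2) (2 * (t-1)) t := by
      simpa using ((hasDerivAt_id t).sub_const 1).fun_pow 2
    have h := this.const_mul (3/2 : ℝ)
    exact h.congr_deriv (by ring)
  have hden : HasDerivAt (fun t : ℝ => t + 2) 1 t := (hasDerivAt_id t).add_const 2
  have hdiv : HasDerivAt (fun t : ℝ => (3/2) * (t-1)^2 / (t+2))
      ((3 * (t-1) * (t+2) - (3/2) * (t-1)^2 * 1) / (t+2)^2) t := hnum.div hden h2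
  have := (h1.sub_const 0)
  have hmain := ((h1.sub (hasDerivAt_id t)).add_const 1).sub hdiv
  refine hmain.congr_deriv ?_
  simp only [hfun']
  field_simp
  ring

lemma hasDeriv_hfun' {t : ℝ} (ht : 0 < t) : HasDerivAt hfun' (hfun'' t) t := by
  have h2 : t + 2 ≠ 0 := by linarith
  have h1 : HasDerivAt Real.log (1/t) t := by simpa [one_div] using Real.hasDerivAt_log (ne_of_gt ht)
  have hnum : HasDerivAt (fun t : ℝ => (3/2) * ((t-1)*(t+5))) ((3/2) * ((t+5) + (t-1))) t := by
    have : HasDerivAt (fun t : ℝ => (t-1)*(t+5)) (1 * (t+5) + (t-1) * 1) t :=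
      ((hasDerivAt_id t).sub_const 1).mul ((hasDerivAt_id t).add_const 5)
    simpa [mul_add, mul_comm, mul_assoc, mul_left_comm] using this.const_mul (3/2 : ℝ)
  have hden : HasDerivAt (fun t : ℝ => (t+2)^2) (2 * (t+2)) t := by
    simpa using ((hasDerivAt_id t).add_const 2).fun_pow 2
  have hdiv : HasDerivAt (fun t : ℝ => (3/2) * ((t-1)*(t+5)) / (t+2)^2)
      (((3/2) * ((t+5) + (t-1)) * (t+2)^2 - (3/2) * ((t-1)*(t+5)) * (2 * (t+2))) / ((t+2)^2)^2) t :=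
    hnum.div hden (pow_ne_zero 2 h2)
  have hmain := h1.sub hdiv
  refine hmain.congr_deriv ?_
  simp only [hfun'']
  field_simp
  ring

lemma hfun''_nonneg {t : ℝ} (ht : 0 < t) : 0 ≤ hfun'' t := by
  have h2 : (0:ℝ) < t + 2 := by linarith
  have key : 27 * t ≤ (t+2)^3 := by nlinarith [sq_nonneg (t-1), sq_nonneg (t+8), mul_nonneg (sq_nonneg (t-1)) (le_of_lt ht)]
  rw [hfun'', sub_nonneg, div_le_div_iff₀ (by positivity) ht]
  nlinarith [pow_pos h2 3]

lemma hfun'_mono : MonotoneOn hfun' (Ioi (0:ℝ)) := by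
  have hderiv : ∀ s ∈ interior (Ioi (0:ℝ)), 0 ≤ deriv hfun' s := by
    intro s hs
    rw [interior_Ioi] at hs
    rw [(hasDeriv_hfun' hs).deriv]
    exact hfun''_nonneg hs
  exact monotoneOn_of_deriv_nonneg (convex_Ioi 0)
    (fun s hs => (hasDeriv_hfun' hs).continuousAt.continuousWithinAt)
    (fun s hs => ((hasDeriv_hfun' (by rwa [interior_Ioi] at hs)).differentiableAt).differentiableWithinAt) hderiv

lemma hfun'_one : hfun' 1 = 0 := by simp [hfun']

lemma hfun_nonneg {t : ℝ} (ht : 0 < t) : 0 ≤ hfun t := by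
  have hone : hfun 1 = 0 := by norm_num [hfun]
  rcases le_or_gt 1 t with h1 | h1
  · -- monotone on Ici 1
    have hmono : MonotoneOn hfun (Ici (1:ℝ)) := by
      apply monotoneOn_of_deriv_nonneg (convex_Ici 1)
      · exact fun s hs => (hasDeriv_hfun (by simp at hs; linarith)).continuousAt.continuousWithinAt
      · intro s hs
        rw [interior_Ici] at hs
        exact ((hasDeriv_hfun (by simp at hs; linarith)).differentiableAt).differentiableWithinAt
      · intro s hs
        rw [interior_Ici] at hs
        rw [(hasDeriv_hfun (by simp at hs; linarith)).deriv]
        have := hfun'_mono (mem_Ioi.2 one_pos) (mem_Ioi.2 (by simp at hs; linarith)) (le_of_lt hs)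
        rw [hfun'_one] at this; exact this
    have := hmono (self_mem_Ici) h1 h1
    rw [hone] at this; exact this
  · have hanti : AntitoneOn hfun (Ioc (0:ℝ) 1) := by
      apply antitoneOn_of_deriv_nonpos (convex_Ioc 0 1)
      · exact fun s hs => (hasDeriv_hfun hs.1).continuousAt.continuousWithinAt
      · intro s hs
        rw [interior_Ioc] at hs
        exact ((hasDeriv_hfun hs.1).differentiableAt).differentiableWithinAt
      · intro s hs
        rw [interior_Ioc] at hs
        rw [(hasDeriv_hfun hs.1).deriv]
        have := hfun'_mono (mem_Ioi.2 hs.1) (mem_Ioi.2 one_pos) (le_of_lt hs.2)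
        rw [hfun'_one] at this; exact this
    have := hanti (mem_Ioc.2 ⟨ht, le_of_lt h1⟩) (mem_Ioc.2 ⟨one_pos, le_refl 1⟩) (le_of_lt h1)
    rw [hone] at this; exact this

/-- pointwise KL inequality -/
lemma kl_pointwise {a b : ℝ} (ha : 0 ≤ a) (hb : 0 < b) :
    3 * (a-b)^2 / (2*a + 4*b) ≤ a * Real.log a - a * Real.log b - a + b := by
  rcases eq_or_lt_of_le ha with h0 | ha
  · rw [← h0]; simp
    rw [div_le_iff₀ (by linarith)]
    nlinarith
  · have hden : (0:ℝ) < 2*a + 4*b := by linarith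
    have ht : 0 < a / b := div_pos ha hb
    have h := hfun_nonneg ht
    rw [hfun] at h
    have hlog : Real.log (a/b) = Real.log a - Real.log b := Real.log_div (ne_of_gt ha) (ne_of_gt hb)
    have hb' : b ≠ 0 := ne_of_gt hb
    have expand : b * ((a/b) * Real.log (a/b) - (a/b) + 1 - (3/2) * ((a/b)-1)^2 / ((a/b)+2))
        = a * Real.log a - a * Real.log b - a + b - 3 * (a-b)^2 / (2*a+4*b) := by
      rw [hlog]
      field_simp
      ring
    nlinarith [mul_nonneg (le_of_lt hb) h]


lemma pinsker {d : ℕ} {z s : Fin d → ℝ} (hz : z ∈ simplex d) (hs : s ∈ simplex d)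
    (hsp : ∀ k, 0 < s k) :
    (l1 (z - s))^2 ≤ 2 * ∑ k, (z k * Real.log (z k) - z k * Real.log (s k)) := by
  obtain ⟨hz0, hz1⟩ := hz
  obtain ⟨hs0, hs1⟩ := hs
  set w : Fin d → ℝ := fun k => (2 * z k + 4 * s k) / 3 with hw
  have hwpos : ∀ k, 0 < w k := fun k => by
    have := hz0 k; have := hsp k; rw [hw]; positivity
  have hwsum : ∑ k, w k = 2 := by
    rw [hw]
    simp only
    rw [← Finset.sum_div]
    rw [Finset.sum_add_distrib, ← Finset.mul_sum, ← Finset.mul_sum, hz1, hs1]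
    norm_num
  -- Cauchy-Schwarz
  have hcs := Finset.sum_mul_sq_le_sq_mul_sq Finset.univ
    (fun k => |z k - s k| / Real.sqrt (w k)) (fun k => Real.sqrt (w k))
  have hfg : ∀ k : Fin d, |z k - s k| / Real.sqrt (w k) * Real.sqrt (w k) = |z k - s k| := by
    intro k
    rw [div_mul_cancel₀]
    exact Real.sqrt_ne_zero'.2 (hwpos k)
  have hf2 : ∀ k : Fin d, (|z k - s k| / Real.sqrt (w k))^2 = (z k - s k)^2 / w k := by
    intro k
    rw [div_pow, sq_abs, Real.sq_sqrt (le_of_lt (hwpos k))]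
  have hg2 : ∀ k : Fin d, (Real.sqrt (w k))^2 = w k := fun k => Real.sq_sqrt (le_of_lt (hwpos k))
  have hl1 : l1 (z - s) = ∑ k, |z k - s k| := by
    simp [l1]
  rw [Finset.sum_congr rfl (fun k _ => hfg k)] at hcs
  rw [Finset.sum_congr rfl (fun k _ => hf2 k), Finset.sum_congr rfl (fun k _ => hg2 k), hwsum] at hcs
  -- pointwise bound
  have hpt : ∀ k : Fin d, (z k - s k)^2 / w k ≤
      z k * Real.log (z k) - z k * Real.log (s k) - z k + s k := by
    intro k
    have h := kl_pointwise (hz0 k) (hsp k)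
    have : (z k - s k)^2 / w k = 3 * (z k - s k)^2 / (2 * z k + 4 * s k) := by
      rw [hw]
      rw [div_div_eq_mul_div, div_eq_div_iff (by have := hz0 k; have := hsp k; positivity)
        (by have := hz0 k; have := hsp k; positivity)]
      ring
    rw [this]; exact h
  have hsum : ∑ k, ((z k - s k)^2 / w k) ≤
      ∑ k, (z k * Real.log (z k) - z k * Real.log (s k)) := by
    calc ∑ k, ((z k - s k)^2 / w k)
        ≤ ∑ k, (z k * Real.log (z k) - z k * Real.log (s k) - z k + s k) :=
          Finset.sum_le_sum (fun k _ => hpt k)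
      _ = ∑ k, (z k * Real.log (z k) - z k * Real.log (s k)) - ∑ k, z k + ∑ k, s k := by
          rw [Finset.sum_add_distrib, Finset.sum_sub_distrib]
      _ = ∑ k, (z k * Real.log (z k) - z k * Real.log (s k)) := by rw [hz1, hs1]; ring
  rw [hl1]
  nlinarith [hcs, hsum]

lemma shannonH_eq {d : ℕ} (y : Fin d → ℝ) : shannonH y = -∑ k, y k * Real.log (y k) := by
  rw [shannonH, ← Finset.sum_neg_distrib]
  congr 1; funext k
  rw [one_div, Real.log_inv]; ring

lemma gap_lemma {d : ℕ} (hd : 0 < d) {η : ℝ} (hη : 0 < η) (v : Fin d → ℝ)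
    {x : Fin d → ℝ} (hxΔ : x ∈ simplex d)
    (hmin : ∀ z ∈ simplex d, inp x v - shannonH x / η ≤ inp z v - shannonH z / η) :
    ∀ z ∈ simplex d,
      inp x v - shannonH x / η + (1/(2*η)) * (l1 (z - x))^2 ≤ inp z v - shannonH z / η := by
  haveI : Nonempty (Fin d) := Fin.pos_iff_nonempty.mp hd
  set Z : ℝ := ∑ j, Real.exp (-(η * v j)) with hZ
  have hZpos : 0 < Z := Finset.sum_pos (fun j _ => Real.exp_pos _) Finset.univ_nonempty
  set s : Fin d → ℝ := fun k => Real.exp (-(η * v k)) / Z with hsdef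
  have hsp : ∀ k, 0 < s k := fun k => div_pos (Real.exp_pos _) hZpos
  have hsΔ : s ∈ simplex d := by
    constructor
    · exact fun k => le_of_lt (hsp k)
    · rw [hsdef]; simp only; rw [← Finset.sum_div, ← hZ, div_self (ne_of_gt hZpos)]
  have hlogs : ∀ k, Real.log (s k) = -(η * v k) - Real.log Z := by
    intro k
    rw [hsdef]
    simp only
    rw [Real.log_div (ne_of_gt (Real.exp_pos _)) (ne_of_gt hZpos), Real.log_exp]
  -- the identity
  have hid : ∀ z ∈ simplex d,
      ∑ k, (z k * Real.log (z k) - z k * Real.log (s k))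
        = η * inp z v + ∑ k, z k * Real.log (z k) + Real.log Z := by
    intro z hzΔ
    have : ∑ k, z k * Real.log (s k) = -(η * inp z v) - Real.log Z := by
      calc ∑ k, z k * Real.log (s k) = ∑ k, (-(η * (z k * v k)) - Real.log Z * z k) := by
            apply Finset.sum_congr rfl; intro k _; rw [hlogs k]; ring
        _ = -(η * inp z v) - Real.log Z := by
            rw [Finset.sum_sub_distrib, Finset.sum_neg_distrib, ← Finset.mul_sum,
              ← Finset.mul_sum, hzΔ.2, inp]
            ring
    rw [Finset.sum_sub_distrib, this]
    ring
  have hFzs : ∀ z ∈ simplex d,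
      η * (inp z v - shannonH z / η) + Real.log Z
        = ∑ k, (z k * Real.log (z k) - z k * Real.log (s k)) := by
    intro z hzΔ
    rw [hid z hzΔ, shannonH_eq]
    field_simp
    ring
  have hDss : ∑ k, (s k * Real.log (s k) - s k * Real.log (s k)) = 0 := by simp
  -- x = s
  have hxs : x = s := by
    have h1 := hmin s hsΔ
    have h2 := hFzs x hxΔ
    have h3 := hFzs s hsΔ
    rw [hDss] at h3
    have hDx : ∑ k, (x k * Real.log (x k) - x k * Real.log (s k)) ≤ 0 := by nlinarith
    have hp := pinsker hxΔ hsΔ hsp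
    have hl1nn : 0 ≤ l1 (x - s) := by
      rw [l1]
      exact Finset.sum_nonneg (fun k _ => abs_nonneg _)
    have hl1 : l1 (x - s) = 0 := by nlinarith
    funext k
    rw [l1] at hl1
    have hall := (Finset.sum_eq_zero_iff_of_nonneg
      (fun k (_ : k ∈ Finset.univ) => abs_nonneg ((x - s) k))).1 hl1 k (Finset.mem_univ k)
    have := abs_eq_zero.mp hall
    simpa [sub_eq_zero] using this
  intro z hzΔ
  have h2 := hFzs z hzΔ
  have h3 := hFzs x hxΔ
  rw [hxs] at h3 ⊢
  rw [hDss] at h3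
  have hp := pinsker hzΔ hsΔ hsp
  have e : (1/(2*η)) * l1 (z - s)^2 = (l1 (z - s)^2/2) / η := by
    field_simp
  have h4 : (l1 (z - s)^2/2)/η ≤ (inp z v - shannonH z / η) - (inp s v - shannonH s / η) := by
    rw [div_le_iff₀ hη]
    nlinarith [hp, h2, h3]
  rw [e]
  linarith [h4]


-- helpers
lemma inp_add_right {d : ℕ} (z a b : Fin d → ℝ) : inp z (a + b) = inp z a + inp z b := by
  simp [inp, mul_add, Finset.sum_add_distrib]

lemma inp_sub_right {d : ℕ} (z a b : Fin d → ℝ) : inp z (a - b) = inp z a - inp z b := by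
  simp [inp, mul_sub, Finset.sum_sub_distrib]

lemma inp_sub_left {d : ℕ} (a b z : Fin d → ℝ) : inp (a - b) z = inp a z - inp b z := by
  simp [inp, sub_mul, Finset.sum_sub_distrib]

lemma inp_sum_right {d : ℕ} (z : Fin d → ℝ) (s : Finset ℕ) (f : ℕ → Fin d → ℝ) :
    inp z (∑ t ∈ s, f t) = ∑ t ∈ s, inp z (f t) := by
  simp only [inp, Finset.sum_apply, Finset.mul_sum]
  rw [Finset.sum_comm]

lemma l1_nonneg {d : ℕ} (v : Fin d → ℝ) : 0 ≤ l1 v :=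
  Finset.sum_nonneg (fun k _ => abs_nonneg _)

lemma l1_sub_comm {d : ℕ} (a b : Fin d → ℝ) : l1 (a - b) = l1 (b - a) := by
  simp only [l1]
  exact Finset.sum_congr rfl (fun k _ => by simp [abs_sub_comm])

lemma abs_le_linf {d : ℕ} (v : Fin d → ℝ) (k : Fin d) : |v k| ≤ linf v := by
  rw [linf]
  exact le_ciSup (Finite.bddAbove_range fun k => |v k|) k

lemma linf_nonneg {d : ℕ} (hd : 0 < d) (v : Fin d → ℝ) : 0 ≤ linf v :=
  le_trans (abs_nonneg (v ⟨0, hd⟩)) (abs_le_linf v ⟨0, hd⟩)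

lemma inp_le_l1_linf {d : ℕ} (u v : Fin d → ℝ) : inp u v ≤ l1 u * linf v := by
  rw [inp, l1, Finset.sum_mul]
  apply Finset.sum_le_sum
  intro k _
  calc u k * v k ≤ |u k * v k| := le_abs_self _
    _ = |u k| * |v k| := abs_mul _ _
    _ ≤ |u k| * linf v := by
        apply mul_le_mul_of_nonneg_left (abs_le_linf v k) (abs_nonneg _)

lemma l1_sub_le_two {d : ℕ} {a b : Fin d → ℝ} (ha : a ∈ simplex d) (hb : b ∈ simplex d) :
    l1 (a - b) ≤ 2 := by
  rw [l1]
  calc ∑ k, |(a - b) k| ≤ ∑ k, (a k + b k) := by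
        apply Finset.sum_le_sum
        intro k _
        simp only [Pi.sub_apply]
        calc |a k - b k| ≤ |a k| + |b k| := abs_sub _ _
          _ = a k + b k := by rw [abs_of_nonneg (ha.1 k), abs_of_nonneg (hb.1 k)]
    _ = 2 := by rw [Finset.sum_add_distrib, ha.2, hb.2]; norm_num

lemma shannonH_nonneg {d : ℕ} {x : Fin d → ℝ} (hx : x ∈ simplex d) : 0 ≤ shannonH x := by
  apply Finset.sum_nonneg
  intro k _
  rcases eq_or_lt_of_le (hx.1 k) with h0 | hpos
  · rw [← h0]; simp
  · apply mul_nonneg (le_of_lt hpos)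
    apply Real.log_nonneg
    rw [le_div_iff₀ hpos, one_mul]
    calc x k ≤ ∑ j, x j := Finset.single_le_sum (fun j _ => hx.1 j) (Finset.mem_univ k)
      _ = 1 := hx.2

lemma shannonH_le_log {d : ℕ} (hd : 1 ≤ d) {x : Fin d → ℝ} (hx : x ∈ simplex d) :
    shannonH x ≤ Real.log d := by
  classical
  set Sup : Finset (Fin d) := Finset.univ.filter (fun k => x k ≠ 0) with hSup
  have hsum : ∑ k ∈ Sup, x k = 1 := by
    rw [← hx.2]
    apply Finset.sum_subset (Finset.filter_subset _ _)
    intro k _ hk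
    simp [hSup] at hk
    exact hk
  have hH : shannonH x = ∑ k ∈ Sup, x k * Real.log (1 / x k) := by
    rw [shannonH]
    symm
    apply Finset.sum_subset (Finset.filter_subset _ _)
    intro k _ hk
    simp [hSup] at hk
    rw [hk]; ring
  have hmem : ∀ k ∈ Sup, (1 / x k) ∈ Set.Ioi (0:ℝ) := by
    intro k hk
    simp [hSup] at hk
    have := lt_of_le_of_ne (hx.1 k) (Ne.symm hk)
    exact mem_Ioi.2 (by positivity)
  have hjensen := (strictConcaveOn_log_Ioi.concaveOn).le_map_sum
    (fun k hk => hx.1 k) hsum hmem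
  have hval : ∑ k ∈ Sup, x k • (1 / x k) = (Sup.card : ℝ) := by
    rw [Finset.card_eq_sum_ones Sup]
    push_cast
    apply Finset.sum_congr rfl
    intro k hk
    simp [hSup] at hk
    rw [smul_eq_mul]
    field_simp
  have hcard : (Sup.card : ℝ) ≤ (d : ℝ) := by
    have := Finset.card_le_card (Finset.filter_subset (fun k => x k ≠ 0) Finset.univ)
    simp at this
    exact_mod_cast le_trans this (le_of_eq (by simp))
  have hcpos : 0 < Sup.card := by
    rcases Finset.eq_empty_or_nonempty Sup with h | h
    · rw [h] at hsum; simp at hsum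
    · exact Finset.card_pos.2 h
  calc shannonH x = ∑ k ∈ Sup, x k • Real.log (1 / x k) := by rw [hH]; rfl
    _ ≤ Real.log (∑ k ∈ Sup, x k • (1 / x k)) := hjensen
    _ = Real.log (Sup.card : ℝ) := by rw [hval]
    _ ≤ Real.log d := Real.log_le_log (by exact_mod_cast hcpos) hcard

lemma tele (f : ℕ → ℝ) (T : ℕ) : ∑ t ∈ Finset.Icc 1 T, (f (t+1) - f t) = f (T+1) - f 1 := by
  induction T with
  | zero => simp
  | succ n ih => rw [Finset.sum_Icc_succ_top (by omega), ih]; ring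


noncomputable def auxL {d : ℕ} (ℓ : ℕ → Fin d → ℝ) (n : ℕ) : Fin d → ℝ :=
  ∑ s ∈ Finset.Icc 1 n, ℓ s
noncomputable def auxG {d : ℕ} (η : ℕ → ℝ) (ℓ mp : ℕ → Fin d → ℝ) (x : ℕ → Fin d → ℝ)
    (t : ℕ) : ℝ :=
  inp (x t) (mp t + auxL ℓ (t-1)) - shannonH (x t) / η t


end RVUAux

/-- RVU bound for optimistic FTRL with the negative Shannon entropy
regularizer (Lemma `oftrl_shannon`). -/
theorem oftrl_shannon_rvu
    (d T : ℕ) (hd : 2 ≤ d)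
    (η : ℕ → ℝ)
    (hηpos : ∀ t ∈ Finset.Icc 1 (T + 1), 0 < η t)
    (hηmono : ∀ t ∈ Finset.Icc 1 T, η (t + 1) ≤ η t)
    (ℓ mp : ℕ → Fin d → ℝ)
    (x : ℕ → Fin d → ℝ)
    (hx : ∀ t ∈ Finset.Icc 1 (T + 1), x t ∈ simplex d ∧
      ∀ z ∈ simplex d,
        inp (x t) (mp t + ∑ s ∈ Finset.Icc 1 (t - 1), ℓ s) - shannonH (x t) / η t
          ≤ inp z (mp t + ∑ s ∈ Finset.Icc 1 (t - 1), ℓ s) - shannonH z / η t) :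
    ∀ xs ∈ simplex d,
      ∑ t ∈ Finset.Icc 1 T, inp (x t - xs) (ℓ t)
        ≤ Real.log d / η (T + 1)
          + (∑ t ∈ Finset.Icc 1 T, η t * (linf (ℓ t - mp t)) ^ 2)
          - (∑ t ∈ Finset.Icc 1 T, (1 / (4 * η t)) * (l1 (x t - x (t + 1))) ^ 2)
          + 2 * linf (mp (T + 1)) := by
  intro xs hxs
  have hd0 : 0 < d := by omega
  have hd1 : (1:ℕ) ≤ d := by omega
  have hT1mem : T + 1 ∈ Finset.Icc 1 (T+1) := Finset.mem_Icc.mpr ⟨by omega, le_refl _⟩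
  have h1mem : 1 ∈ Finset.Icc 1 (T+1) := Finset.mem_Icc.mpr ⟨le_refl _, by omega⟩
  have hmem1 : ∀ t ∈ Finset.Icc 1 T, t ∈ Finset.Icc 1 (T+1) := by
    intro t ht; rw [Finset.mem_Icc] at ht ⊢; omega
  have hmem2 : ∀ t ∈ Finset.Icc 1 T, t + 1 ∈ Finset.Icc 1 (T+1) := by
    intro t ht; rw [Finset.mem_Icc] at ht ⊢; omega
  have hxmem : ∀ t ∈ Finset.Icc 1 (T+1), x t ∈ simplex d := fun t ht => (hx t ht).1
  have hgap : ∀ t ∈ Finset.Icc 1 (T+1), ∀ z ∈ simplex d,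
      auxG η ℓ mp x t + (1/(2*η t)) * (l1 (z - x t))^2
        ≤ inp z (mp t + auxL ℓ (t-1)) - shannonH z / η t := by
    intro t ht z hz
    exact gap_lemma hd0 (hηpos t ht) (mp t + auxL ℓ (t-1)) (hx t ht).1 (hx t ht).2 z hz
  -- per-step key inequality
  have hkey : ∀ t ∈ Finset.Icc 1 T,
      inp (x (t+1)) (ℓ t - mp t)
        ≤ auxG η ℓ mp x (t+1) - auxG η ℓ mp x t - inp (x (t+1)) (mp (t+1))
          + shannonH (x (t+1)) * (1/η (t+1) - 1/η t)
          - (1/(2*η t)) * (l1 (x t - x (t+1)))^2 := by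
    intro t ht
    have ht1 : 1 ≤ t := (Finset.mem_Icc.mp ht).1
    have hstep := hgap t (hmem1 t ht) (x (t+1)) (hxmem (t+1) (hmem2 t ht))
    have hLt : auxL ℓ t = auxL ℓ (t-1) + ℓ t := by
      have h : t - 1 + 1 = t := by omega
      conv_lhs => rw [auxL, ← h]
      rw [Finset.sum_Icc_succ_top (by omega : 1 ≤ t - 1 + 1), h]
      rfl
    have hGrow : auxG η ℓ mp x (t+1)
        = inp (x (t+1)) (mp (t+1)) + inp (x (t+1)) (auxL ℓ (t-1)) + inp (x (t+1)) (ℓ t)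
          - shannonH (x (t+1)) / η (t+1) := by
      rw [auxG, show t + 1 - 1 = t from rfl, hLt, ← add_assoc, inp_add_right, inp_add_right]
    rw [inp_add_right, l1_sub_comm] at hstep
    have e1 : shannonH (x (t+1)) / η (t+1) = shannonH (x (t+1)) * (1/η (t+1)) := by ring
    have e2 : shannonH (x (t+1)) / η t = shannonH (x (t+1)) * (1/η t) := by ring
    have e3 : inp (x (t+1)) (ℓ t - mp t)
        = inp (x (t+1)) (ℓ t) - inp (x (t+1)) (mp t) := inp_sub_right _ _ _
    have e5 : shannonH (x (t+1)) * (1/η (t+1) - 1/η t)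
        = shannonH (x (t+1)) * (1/η (t+1)) - shannonH (x (t+1)) * (1/η t) := by ring
    rw [e2] at hstep
    rw [e1] at hGrow
    linarith [hstep, hGrow, e3, e5]
  have hsumkey := Finset.sum_le_sum hkey
  have htele : ∑ t ∈ Finset.Icc 1 T, (auxG η ℓ mp x (t+1) - auxG η ℓ mp x t)
      = auxG η ℓ mp x (T+1) - auxG η ℓ mp x 1 := tele (fun t => auxG η ℓ mp x t) T
  have htele2 : ∑ t ∈ Finset.Icc 1 T, (inp (x (t+1)) (mp (t+1)) - inp (x t) (mp t))
      = inp (x (T+1)) (mp (T+1)) - inp (x 1) (mp 1) := tele (fun t => inp (x t) (mp t)) T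
  have hηtele : ∑ t ∈ Finset.Icc 1 T, (Real.log d * (1/η (t+1)) - Real.log d * (1/η t))
      = Real.log d * (1/η (T+1)) - Real.log d * (1/η 1) :=
    tele (fun t => Real.log d * (1/η t)) T
  have hsplit : ∑ t ∈ Finset.Icc 1 T,
        (auxG η ℓ mp x (t+1) - auxG η ℓ mp x t - inp (x (t+1)) (mp (t+1))
          + shannonH (x (t+1)) * (1/η (t+1) - 1/η t)
          - (1/(2*η t)) * (l1 (x t - x (t+1)))^2)
      = (auxG η ℓ mp x (T+1) - auxG η ℓ mp x 1)
        - (∑ t ∈ Finset.Icc 1 T, inp (x (t+1)) (mp (t+1)))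
        + (∑ t ∈ Finset.Icc 1 T, shannonH (x (t+1)) * (1/η (t+1) - 1/η t))
        - (∑ t ∈ Finset.Icc 1 T, (1/(2*η t)) * (l1 (x t - x (t+1)))^2) := by
    rw [← htele, ← Finset.sum_sub_distrib, ← Finset.sum_add_distrib, ← Finset.sum_sub_distrib]
  have hHsum : ∑ t ∈ Finset.Icc 1 T, shannonH (x (t+1)) * (1/η (t+1) - 1/η t)
      ≤ ∑ t ∈ Finset.Icc 1 T, (Real.log d * (1/η (t+1)) - Real.log d * (1/η t)) := by
    apply Finset.sum_le_sum
    intro t ht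
    have h1 : 0 < η t := hηpos t (hmem1 t ht)
    have h2 : 0 < η (t+1) := hηpos (t+1) (hmem2 t ht)
    have h3 : η (t+1) ≤ η t := hηmono t ht
    have hc : 0 ≤ 1/η (t+1) - 1/η t := by
      rw [sub_nonneg]
      exact one_div_le_one_div_of_le h2 h3
    have hH := shannonH_le_log hd1 (hxmem (t+1) (hmem2 t ht))
    calc shannonH (x (t+1)) * (1/η (t+1) - 1/η t)
        ≤ Real.log d * (1/η (t+1) - 1/η t) := mul_le_mul_of_nonneg_right hH hc
      _ = Real.log d * (1/η (t+1)) - Real.log d * (1/η t) := by ring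
  -- decomposition of regret
  have hdec : ∑ t ∈ Finset.Icc 1 T, inp (x t - xs) (ℓ t)
      = (∑ t ∈ Finset.Icc 1 T, inp (x t - x (t+1)) (ℓ t - mp t))
        + (∑ t ∈ Finset.Icc 1 T, inp (x (t+1)) (ℓ t - mp t))
        - (∑ t ∈ Finset.Icc 1 T, (inp (x (t+1)) (mp (t+1)) - inp (x t) (mp t)))
        + (∑ t ∈ Finset.Icc 1 T, inp (x (t+1)) (mp (t+1)))
        - ∑ t ∈ Finset.Icc 1 T, inp xs (ℓ t) := by
    rw [← Finset.sum_add_distrib, ← Finset.sum_sub_distrib, ← Finset.sum_add_distrib,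
      ← Finset.sum_sub_distrib]
    apply Finset.sum_congr rfl
    intro t _
    simp only [inp_sub_left, inp_sub_right]
    ring
  -- final minimality
  have hfinal : auxG η ℓ mp x (T+1)
      ≤ inp xs (mp (T+1)) + (∑ t ∈ Finset.Icc 1 T, inp xs (ℓ t)) - shannonH xs / η (T+1) := by
    have h := (hx (T+1) hT1mem).2 xs hxs
    have h2 : inp xs (mp (T+1) + ∑ s ∈ Finset.Icc 1 (T+1-1), ℓ s)
        = inp xs (mp (T+1)) + ∑ t ∈ Finset.Icc 1 T, inp xs (ℓ t) := by
      rw [inp_add_right, inp_sum_right, Nat.add_sub_cancel]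
    rw [h2] at h
    exact h
  have hG1 : auxG η ℓ mp x 1 = inp (x 1) (mp 1) - shannonH (x 1) / η 1 := by
    have h0 : auxL ℓ 0 = 0 := by simp [auxL]
    rw [auxG, show (1:ℕ)-1 = 0 from rfl, h0, add_zero]
  -- AM-GM per step
  have hamgm : ∀ t ∈ Finset.Icc 1 T,
      inp (x t - x (t+1)) (ℓ t - mp t) - (1/(2*η t)) * (l1 (x t - x (t+1)))^2
        ≤ η t * (linf (ℓ t - mp t))^2 - (1/(4*η t)) * (l1 (x t - x (t+1)))^2 := by
    intro t ht
    have h1 : 0 < η t := hηpos t (hmem1 t ht)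
    have h2 := inp_le_l1_linf (x t - x (t+1)) (ℓ t - mp t)
    have e : (1/(2*η t)) * (l1 (x t - x (t+1)))^2 - (1/(4*η t)) * (l1 (x t - x (t+1)))^2
        = (l1 (x t - x (t+1)))^2/(4*η t) := by
      field_simp; ring
    have key : l1 (x t - x (t+1)) * linf (ℓ t - mp t)
        ≤ η t * (linf (ℓ t - mp t))^2 + (l1 (x t - x (t+1)))^2/(4*η t) := by
      rw [← sub_nonneg]
      have e2 : η t * (linf (ℓ t - mp t))^2 + (l1 (x t - x (t+1)))^2/(4*η t)
          - l1 (x t - x (t+1)) * linf (ℓ t - mp t)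
          = (2*η t*linf (ℓ t - mp t) - l1 (x t - x (t+1)))^2/(4*η t) := by
        field_simp; ring
      rw [e2]; positivity
    linarith
  have hsum2 : (∑ t ∈ Finset.Icc 1 T, inp (x t - x (t+1)) (ℓ t - mp t))
        - (∑ t ∈ Finset.Icc 1 T, (1/(2*η t)) * (l1 (x t - x (t+1)))^2)
      ≤ (∑ t ∈ Finset.Icc 1 T, η t * (linf (ℓ t - mp t))^2)
        - (∑ t ∈ Finset.Icc 1 T, (1/(4*η t)) * (l1 (x t - x (t+1)))^2) := by
    rw [← Finset.sum_sub_distrib, ← Finset.sum_sub_distrib]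
    exact Finset.sum_le_sum hamgm
  have hmterm : inp (xs - x (T+1)) (mp (T+1)) ≤ 2 * linf (mp (T+1)) :=
    calc inp (xs - x (T+1)) (mp (T+1))
        ≤ l1 (xs - x (T+1)) * linf (mp (T+1)) := inp_le_l1_linf _ _
      _ ≤ 2 * linf (mp (T+1)) :=
          mul_le_mul_of_nonneg_right (l1_sub_le_two hxs (hxmem (T+1) hT1mem))
            (linf_nonneg hd0 _)
  have hmterm' : inp (xs - x (T+1)) (mp (T+1))
      = inp xs (mp (T+1)) - inp (x (T+1)) (mp (T+1)) := inp_sub_left _ _ _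
  have hHxs : 0 ≤ shannonH xs / η (T+1) :=
    div_nonneg (shannonH_nonneg hxs) (le_of_lt (hηpos (T+1) hT1mem))
  have hHx1 : shannonH (x 1) / η 1 ≤ Real.log d / η 1 := by
    apply div_le_div_of_nonneg_right (shannonH_le_log hd1 (hxmem 1 h1mem)) (hηpos 1 h1mem).le
  have ed1 : Real.log d / η (T+1) = Real.log d * (1/η (T+1)) := by ring
  have ed2 : Real.log d / η 1 = Real.log d * (1/η 1) := by ring
  rw [hsplit] at hsumkey
  rw [hdec, htele2]
  linarith [hsumkey, hHsum, hηtele, hfinal, hG1, hsum2, hmterm, hmterm', hHxs, hHx1]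
end
end

section
/- Let d ≥ 2, T ≥ 1, let φ(x) = −Σ_{k=1}^d log(x(k)) be the log-barrier on the interior of Δ_d, let η^(1) ≥ ⋯ ≥ η^(T+1) > 0 be nonincreasing, let ℓ^(1),…,ℓ^(T), m^(1),…,m^(T+1) ∈ ℝ^d, and for each t = 1,…,T+1 let x^(t) be the minimizer over Δ_d of x ↦ ⟨x, m^(t) + Σ_{s=1}^{t−1} ℓ^(s)⟩ + φ(x)/η^(t). Suppose ‖x^(t+1) − x^(t)‖_{x^(t),φ} ≤ 1/2 for every t = 1,…,T. Then for every x* ∈ Δ_d: Σ_{t=1}^T ⟨x^(t) − x*, ℓ^(t)⟩ ≤ (d log T)/η^(T+1) + 4 Σ_{t=1}^T η^(t) ‖ℓ^(t) − m^(t)‖_{*,x^(t),φ}² − Σ_{t=1}^T (1/(16η^(t))) ‖x^(t+1) − x^(t)‖_{x^(t),φ}² + 6L, where L = max{ max_{1≤t≤T} ‖ℓ^(t)‖_∞, max_{1≤t≤T+1} ‖m^(t)‖_∞ }. -/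
open Finset

noncomputable section

-- scalar inequality
lemma my_scalar (r : ℝ) (hr : |r| ≤ 1/2) : (3/16) * r^2 ≤ r - Real.log (1 + r) := by
  obtain ⟨h1, h2⟩ := abs_le.1 hr
  have hpos : (0:ℝ) < 1 + r := by linarith
  have key : 1 + r ≤ Real.exp (r - (3/16)*r^2) := by
    have he := Real.add_one_le_exp ((r - (3/16)*r^2)/2)
    have hu : 0 ≤ 1 + (r - (3/16)*r^2)/2 := by nlinarith
    have hsq : Real.exp ((r - (3/16)*r^2)/2) * Real.exp ((r - (3/16)*r^2)/2)
        = Real.exp (r - (3/16)*r^2) := by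
      rw [← Real.exp_add]; ring_nf
    nlinarith [he, hu, hsq]
  have := (Real.log_le_iff_le_exp hpos).2 key
  linarith

-- telescoping
lemma my_telescope (A : ℕ → ℝ) (n : ℕ) : ∑ t ∈ Icc 1 n, (A t - A (t+1)) = A 1 - A (n+1) := by
  induction n with
  | zero => simp
  | succ n ih => rw [Finset.sum_Icc_succ_top (Nat.le_add_left 1 n), ih]; ring

-- inp bound
lemma my_inp_le {d : ℕ} (v w : Fin d → ℝ) (M : ℝ) (hM : ∀ k, |w k| ≤ M) :
    inp v w ≤ (∑ k, |v k|) * M := by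
  rw [inp, Finset.sum_mul]
  refine Finset.sum_le_sum fun k _ => ?_
  calc v k * w k ≤ |v k * w k| := le_abs_self _
    _ = |v k| * |w k| := abs_mul _ _
    _ ≤ |v k| * M := mul_le_mul_of_nonneg_left (hM k) (abs_nonneg _)

-- log barrier lower bound (AM-GM)
lemma my_logBarrier_ge {d : ℕ} (hd : 0 < d) (x : Fin d → ℝ) (hx : x ∈ simplex d)
    (hpos : ∀ k, 0 < x k) : (d:ℝ) * Real.log d ≤ logBarrier x := by
  have h1 : ∑ k, Real.log ((d:ℝ) * x k) ≤ 0 := by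
    calc ∑ k, Real.log ((d:ℝ) * x k) ≤ ∑ k, ((d:ℝ) * x k - 1) :=
          Finset.sum_le_sum fun k _ => Real.log_le_sub_one_of_pos
            (mul_pos (Nat.cast_pos.mpr hd) (hpos k))
      _ = (d:ℝ) * ∑ k, x k - d := by rw [Finset.sum_sub_distrib, ← Finset.mul_sum]; simp
      _ = 0 := by rw [hx.2]; ring
  have h2 : ∀ k : Fin d, Real.log ((d:ℝ) * x k) = Real.log d + Real.log (x k) := fun k =>
    Real.log_mul (ne_of_gt (Nat.cast_pos.mpr hd : (0:ℝ) < d)) (ne_of_gt (hpos k))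
  simp only [h2, Finset.sum_add_distrib, Finset.sum_const, Finset.card_univ, Fintype.card_fin,
    nsmul_eq_mul] at h1
  rw [logBarrier]; linarith

-- Cauchy-Schwarz in local norms
lemma my_cs {d : ℕ} (x v w : Fin d → ℝ) (hpos : ∀ k, 0 < x k) :
    inp v w ≤ locNorm x v * dualLocNorm x w := by
  have : inp v w = ∑ k, (v k / x k) * (x k * w k) := by
    refine Finset.sum_congr rfl fun k _ => ?_
    have hk := (hpos k).ne'
    field_simp
  rw [this, locNorm, dualLocNorm]
  have := Real.sum_mul_le_sqrt_mul_sqrt Finset.univ (fun k => v k / x k) (fun k => x k * w k)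
  simpa [div_pow, mul_pow] using this

lemma my_keymin {d : ℕ} (η : ℝ) (hη : 0 < η) (c : Fin d → ℝ) (x y : Fin d → ℝ)
    (hxs : x ∈ simplex d) (hxpos : ∀ k, 0 < x k)
    (hys : y ∈ simplex d) (hypos : ∀ k, 0 < y k)
    (hmin : ∀ z ∈ simplex d, (∀ k, 0 < z k) →
      inp x c + logBarrier x / η ≤ inp z c + logBarrier z / η)
    (hr : ∀ k, |y k - x k| ≤ x k / 2) :
    inp x c + logBarrier x / η + (3/16) * (∑ k, (y k - x k)^2 / (x k)^2) / η
      ≤ inp y c + logBarrier y / η := by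
  set S : ℝ := ∑ k, (y k - x k)^2 / (x k)^2 with hS
  set f : ℝ → ℝ := fun s =>
    (∑ k, (x k + s * (y k - x k)) * c k) - (∑ k, Real.log (x k + s * (y k - x k))) / η with hf
  set D0 : ℝ := (∑ k, (y k - x k) * c k) - (∑ k, (y k - x k) / x k) / η with hD0def
  have hd1 : ∀ k, HasDerivAt (fun s : ℝ => x k + s * (y k - x k)) (y k - x k) 0 := fun k => by
    simpa using (hasDerivAt_mul_const (y k - x k)).const_add (x k)
  have hderiv : HasDerivAt f D0 0 := by
    have hd2 : HasDerivAt (fun s => ∑ k, (x k + s * (y k - x k)) * c k)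
        (∑ k, (y k - x k) * c k) 0 := HasDerivAt.fun_sum fun k _ => (hd1 k).mul_const (c k)
    have hd3 : HasDerivAt (fun s => ∑ k, Real.log (x k + s * (y k - x k)))
        (∑ k, (y k - x k) / x k) 0 := by
      refine HasDerivAt.fun_sum fun k _ => ?_
      have h0 : x k + (0:ℝ) * (y k - x k) ≠ 0 := by simpa using (hxpos k).ne'
      simpa using (hd1 k).log h0
    exact hd2.sub (hd3.div_const η)
  have hmem : ∀ s ∈ Set.Ioo (0:ℝ) 1, f 0 ≤ f s := by
    rintro s ⟨hs0, hs1⟩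
    have hz : (fun k => x k + s * (y k - x k)) ∈ simplex d ∧
        ∀ k, 0 < x k + s * (y k - x k) := by
      constructor
      · constructor
        · intro k
          show (0:ℝ) ≤ x k + s * (y k - x k)
          nlinarith [mul_pos hs0 (hypos k), mul_pos (show (0:ℝ) < 1 - s by linarith) (hxpos k)]
        · have : ∑ k, (x k + s * (y k - x k)) = (∑ k, x k) + s * ((∑ k, y k) - (∑ k, x k)) := by
            rw [Finset.sum_add_distrib, ← Finset.mul_sum, Finset.sum_sub_distrib]
          rw [this, hxs.2, hys.2]; ring
      · intro k
        show (0:ℝ) < x k + s * (y k - x k)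
        nlinarith [mul_pos hs0 (hypos k), mul_pos (show (0:ℝ) < 1 - s by linarith) (hxpos k)]
    have := hmin _ hz.1 hz.2
    have hf0 : f 0 = inp x c + logBarrier x / η := by
      simp [hf, inp, logBarrier, sub_eq_add_neg, neg_div]
    have hfs : f s = inp (fun k => x k + s * (y k - x k)) c
        + logBarrier (fun k => x k + s * (y k - x k)) / η := by
      simp [hf, inp, logBarrier, sub_eq_add_neg, neg_div]
    rw [hf0, hfs]; exact this
  have hD0 : 0 ≤ D0 := by
    have hslope := hasDerivAt_iff_tendsto_slope.1 hderiv
    have hmono : nhdsWithin (0:ℝ) (Set.Ioi 0) ≤ nhdsWithin 0 {(0:ℝ)}ᶜ :=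
      nhdsWithin_mono _ (fun s hs => ne_of_gt hs)
    refine ge_of_tendsto (hslope.mono_left hmono) ?_
    filter_upwards [Ioo_mem_nhdsGT_of_mem (Set.mem_Ico.mpr ⟨le_refl 0, zero_lt_one⟩)] with s hs
    rw [slope_def_field]
    have := hmem s hs
    have hs0 : (0:ℝ) < s := hs.1
    apply div_nonneg (by linarith) (by simp [hs0.le])
  have hbreg : ∀ k : Fin d, (3/16) * ((y k - x k)^2 / (x k)^2)
      ≤ (y k - x k)/(x k) - (Real.log (y k) - Real.log (x k)) := by
    intro k
    set r := (y k - x k) / x k with hrdef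
    have hxk := hxpos k
    have hrb : |r| ≤ 1/2 := by
      rw [hrdef, abs_div, abs_of_pos hxk, div_le_iff₀ hxk]
      have := hr k; linarith
    have hyx : (1:ℝ) + r = y k / x k := by
      rw [hrdef]; field_simp; ring
    have hlog : Real.log (y k) - Real.log (x k) = Real.log (1 + r) := by
      rw [hyx, Real.log_div (hypos k).ne' hxk.ne']
    have hsc := my_scalar r hrb
    have hr2 : (y k - x k)^2 / (x k)^2 = r^2 := by rw [hrdef, div_pow]
    rw [hr2, hlog]; linarith
  have hsum : (3/16) * S ≤ (∑ k, (y k - x k)/x k) + logBarrier y - logBarrier x := by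
    calc (3/16) * S = ∑ k, (3/16) * ((y k - x k)^2/(x k)^2) := Finset.mul_sum _ _ _
      _ ≤ ∑ k, ((y k - x k)/(x k) - (Real.log (y k) - Real.log (x k))) :=
          Finset.sum_le_sum fun k _ => hbreg k
      _ = (∑ k, (y k - x k)/x k) + logBarrier y - logBarrier x := by
          simp [Finset.sum_sub_distrib, logBarrier]; ring
  have hinp : inp y c - inp x c = ∑ k, (y k - x k) * c k := by
    rw [inp, inp, ← Finset.sum_sub_distrib]
    exact Finset.sum_congr rfl fun k _ => (sub_mul _ _ _).symm
  have hdiv : (3/16) * S / η ≤ ((∑ k, (y k - x k)/x k) + logBarrier y - logBarrier x) / η :=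
by gcongr
  rw [sub_div, add_div] at hdiv
  rw [hD0def] at hD0
  linarith

lemma my_step {d : ℕ} (hd : 0 < d) (ηt ηt1 : ℝ) (hηt : 0 < ηt) (hηt1 : 0 < ηt1)
    (hmono : ηt1 ≤ ηt) (c lt mt : Fin d → ℝ)
    (xt xt1 : Fin d → ℝ) (hxt : xt ∈ simplex d) (hxtpos : ∀ k, 0 < xt k)
    (hxt1 : xt1 ∈ simplex d) (hxt1pos : ∀ k, 0 < xt1 k)
    (hmin : ∀ z ∈ simplex d, (∀ k, 0 < z k) →
      inp xt (mt + c) + logBarrier xt / ηt ≤ inp z (mt + c) + logBarrier z / ηt)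
    (hstab : locNorm xt (xt1 - xt) ≤ 1/2) :
    inp xt lt + (inp xt c + (logBarrier xt - (d:ℝ)*Real.log d)/ηt)
      - (inp xt1 (c + lt) + (logBarrier xt1 - (d:ℝ)*Real.log d)/ηt1)
    ≤ 4*(ηt * dualLocNorm xt (lt - mt)^2) - (1/(16*ηt)) * locNorm xt (xt1 - xt)^2 := by
  set a := locNorm xt (xt1 - xt) with hadef
  set b := dualLocNorm xt (lt - mt) with hbdef
  have hS0 : (0:ℝ) ≤ ∑ k, (xt1 k - xt k)^2/(xt k)^2 := by positivity
  set S := ∑ k, (xt1 k - xt k)^2/(xt k)^2 with hSdef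
  have ha2 : a^2 = S := by
    rw [hadef, locNorm, Real.sq_sqrt (by positivity), hSdef]
    exact Finset.sum_congr rfl fun k _ => by rw [Pi.sub_apply]
  have ha0 : 0 ≤ a := Real.sqrt_nonneg _
  have hb0 : 0 ≤ b := Real.sqrt_nonneg _
  have hS4 : S ≤ 1/4 := by nlinarith
  have hr : ∀ k, |xt1 k - xt k| ≤ xt k / 2 := by
    intro k
    have hxk := hxtpos k
    have h1 : (xt1 k - xt k)^2 / (xt k)^2 ≤ 1/4 :=
      le_trans (Finset.single_le_sum (f := fun k => (xt1 k - xt k)^2/(xt k)^2)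
        (fun k _ => by positivity) (Finset.mem_univ k)) hS4
    have h2 : (xt1 k - xt k)^2 ≤ (xt k / 2)^2 := by
      rw [div_le_iff₀ (by positivity)] at h1; nlinarith
    calc |xt1 k - xt k| = Real.sqrt ((xt1 k - xt k)^2) := (Real.sqrt_sq_eq_abs _).symm
      _ ≤ Real.sqrt ((xt k/2)^2) := Real.sqrt_le_sqrt h2
      _ = xt k / 2 := Real.sqrt_sq (by positivity)
  have hkey := my_keymin ηt hηt (mt + c) xt xt1 hxt hxtpos hxt1 hxt1pos hmin hr
  have hcs : inp (xt - xt1) (lt - mt) ≤ a * b := by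
    have h := my_cs xt (xt - xt1) (lt - mt) hxtpos
    have heq : locNorm xt (xt - xt1) = a := by
      rw [hadef, locNorm, locNorm]
      congr 1
      refine Finset.sum_congr rfl fun k _ => ?_
      rw [Pi.sub_apply, Pi.sub_apply]
      ring
    rw [heq] at h
    exact h
  have hcs2 : inp (xt - xt1) (lt - mt) ≤ 1/(8*ηt)*S + 2*ηt*b^2 := by
    have key : 8*ηt*(a*b) ≤ a^2 + 16*ηt^2*b^2 := by nlinarith [sq_nonneg (a - 4*ηt*b)]
    have h8 : (0:ℝ) < 8*ηt := by linarith
    have hab : a*b ≤ 1/(8*ηt)*a^2 + 2*ηt*b^2 := by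
      rw [← sub_nonneg]
      have expand : 1/(8*ηt)*a^2 + 2*ηt*b^2 - a*b = (a^2 + 16*ηt^2*b^2 - 8*ηt*(a*b))/(8*ηt) := by
        field_simp; ring
      rw [expand]
      exact div_nonneg (by linarith) h8.le
    calc inp (xt - xt1) (lt - mt) ≤ a*b := hcs
      _ ≤ 1/(8*ηt)*a^2 + 2*ηt*b^2 := hab
      _ = 1/(8*ηt)*S + 2*ηt*b^2 := by rw [ha2]
  have hφ1 : (d:ℝ)*Real.log d ≤ logBarrier xt1 := my_logBarrier_ge hd xt1 hxt1 hxt1pos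
  have hmonostep : (logBarrier xt1 - (d:ℝ)*Real.log d)/ηt ≤ (logBarrier xt1 - (d:ℝ)*Real.log d)/ηt1 := by
    gcongr
  have hsplit : inp xt lt + inp xt c - inp xt1 (c + lt)
      = (inp xt (mt + c) - inp xt1 (mt + c)) + inp (xt - xt1) (lt - mt) := by
    simp only [inp, Pi.add_apply, Pi.sub_apply, ← Finset.sum_add_distrib, ← Finset.sum_sub_distrib]
    refine Finset.sum_congr rfl fun k _ => by ring
  have e1 : (3/16) * S / ηt = (3/16)*(S/ηt) := by ring
  have e2 : 1/(8*ηt)*S = (1/8)*(S/ηt) := by field_simp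
  have e3 : (1/(16*ηt))*S = (1/16)*(S/ηt) := by field_simp
  have hP : 0 ≤ S/ηt := div_nonneg hS0 hηt.le
  have hbb : 0 ≤ ηt*b^2 := mul_nonneg hηt.le (sq_nonneg b)
  have ed1 : (logBarrier xt - (d:ℝ)*Real.log d)/ηt = logBarrier xt/ηt - ((d:ℝ)*Real.log d)/ηt := sub_div _ _ _
  have ed2 : (logBarrier xt1 - (d:ℝ)*Real.log d)/ηt = logBarrier xt1/ηt - ((d:ℝ)*Real.log d)/ηt := sub_div _ _ _
  rw [← hSdef] at hkey
  have ekey : (3/16 * S)/ηt = (3/16)*(S/ηt) := by ring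
  rw [ha2]
  linarith [hkey, ekey, hcs2, hmonostep, hsplit, e2, e3, hP, hbb, ed1, ed2]

lemma my_inp_add_right {d : ℕ} (u v w : Fin d → ℝ) : inp u (v + w) = inp u v + inp u w := by
  simp [inp, mul_add, Finset.sum_add_distrib]

lemma my_inp_sub_left {d : ℕ} (u v w : Fin d → ℝ) : inp (u - v) w = inp u w - inp v w := by
  simp [inp, sub_mul, Finset.sum_sub_distrib]

lemma my_inp_sum_right {d : ℕ} (u : Fin d → ℝ) (S : Finset ℕ) (f : ℕ → Fin d → ℝ) :
    inp u (∑ s ∈ S, f s) = ∑ s ∈ S, inp u (f s) := by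
  simp only [inp, Finset.sum_apply, Finset.mul_sum]
  exact Finset.sum_comm


/-- RVU bound for optimistic FTRL with the log-barrier regularizer and
an adaptive (nonincreasing) learning rate (Lemma `oftrl_logbarrier`). -/
theorem oftrl_logbarrier_rvu
    (d T : ℕ) (hd : 2 ≤ d) (hT : 1 ≤ T)
    (η : ℕ → ℝ)
    (hηpos : ∀ t ∈ Finset.Icc 1 (T + 1), 0 < η t)
    (hηmono : ∀ t ∈ Finset.Icc 1 T, η (t + 1) ≤ η t)
    (ℓ mp : ℕ → Fin d → ℝ)
    (x : ℕ → Fin d → ℝ)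
    (hx : ∀ t ∈ Finset.Icc 1 (T + 1), x t ∈ simplex d ∧ (∀ k, 0 < x t k) ∧
      ∀ z ∈ simplex d, (∀ k, 0 < z k) →
        inp (x t) (mp t + ∑ s ∈ Finset.Icc 1 (t - 1), ℓ s) + logBarrier (x t) / η t
          ≤ inp z (mp t + ∑ s ∈ Finset.Icc 1 (t - 1), ℓ s) + logBarrier z / η t)
    (hstab : ∀ t ∈ Finset.Icc 1 T, locNorm (x t) (x (t + 1) - x t) ≤ 1 / 2)
    (L : ℝ)
    (hL : L = max
      ((Finset.Icc 1 T).sup' (Finset.nonempty_Icc.mpr hT) fun t => linf (ℓ t))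
      ((Finset.Icc 1 (T + 1)).sup' (Finset.nonempty_Icc.mpr (Nat.le_add_left 1 T))
        fun t => linf (mp t))) :
    ∀ xs ∈ simplex d,
      ∑ t ∈ Finset.Icc 1 T, inp (x t - xs) (ℓ t)
        ≤ (d : ℝ) * Real.log T / η (T + 1)
          + 4 * (∑ t ∈ Finset.Icc 1 T, η t * (dualLocNorm (x t) (ℓ t - mp t)) ^ 2)
          - (∑ t ∈ Finset.Icc 1 T, (1 / (16 * η t)) * (locNorm (x t) (x (t + 1) - x t)) ^ 2)
          + 6 * L := by
  intro xs hxs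
  have hd0 : 0 < d := by omega
  have hdR : (0:ℝ) < d := Nat.cast_pos.mpr hd0
  have hTR : (1:ℝ) ≤ (T:ℝ) := Nat.one_le_cast.mpr hT
  have hTR0 : (0:ℝ) < T := by linarith
  -- L facts
  have hlinf : ∀ (v : Fin d → ℝ) (k : Fin d), |v k| ≤ linf v := by
    intro v k
    rw [linf]
    exact le_ciSup (f := fun k => |v k|) (Set.finite_range _).bddAbove k
  have hLl : ∀ t ∈ Finset.Icc 1 T, ∀ k, |ℓ t k| ≤ L := by
    intro t ht k
    calc |ℓ t k| ≤ linf (ℓ t) := hlinf _ k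
      _ ≤ (Finset.Icc 1 T).sup' (Finset.nonempty_Icc.mpr hT) fun t => linf (ℓ t) :=
          Finset.le_sup' (fun t => linf (ℓ t)) ht
      _ ≤ L := by rw [hL]; exact le_max_left _ _
  have hLm : ∀ t ∈ Finset.Icc 1 (T+1), ∀ k, |mp t k| ≤ L := by
    intro t ht k
    calc |mp t k| ≤ linf (mp t) := hlinf _ k
      _ ≤ (Finset.Icc 1 (T+1)).sup' (Finset.nonempty_Icc.mpr (Nat.le_add_left 1 T))
          fun t => linf (mp t) := Finset.le_sup' (fun t => linf (mp t)) ht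
      _ ≤ L := by rw [hL]; exact le_max_right _ _
  have h1T : 1 ∈ Finset.Icc 1 T := Finset.mem_Icc.mpr ⟨le_refl 1, hT⟩
  have hL0 : 0 ≤ L := le_trans (abs_nonneg (ℓ 1 ⟨0, hd0⟩)) (hLl 1 h1T ⟨0, hd0⟩)
  -- comparator z
  set z : Fin d → ℝ := fun k => (1 - 1/(T:ℝ)) * xs k + 1/((T:ℝ)*d) with hzdef
  clear_value z
  have hfrac : (0:ℝ) ≤ 1 - 1/(T:ℝ) := by
    rw [sub_nonneg]
    rw [div_le_one hTR0]
    exact hTR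
  have hz1 : ∀ k, 0 < z k := by
    intro k
    have h1 : 0 ≤ (1 - 1/(T:ℝ)) * xs k := mul_nonneg hfrac (hxs.1 k)
    have h2 : 0 < 1/((T:ℝ)*d) := by positivity
    simp only [hzdef]
    linarith
  have hzlow : ∀ k, 1/((T:ℝ)*d) ≤ z k := by
    intro k
    have h1 : 0 ≤ (1 - 1/(T:ℝ)) * xs k := mul_nonneg hfrac (hxs.1 k)
    simp only [hzdef]
    linarith
  have hzs : z ∈ simplex d := by
    refine ⟨fun k => (hz1 k).le, ?_⟩
    simp only [hzdef]
    rw [Finset.sum_add_distrib, ← Finset.mul_sum, hxs.2, Finset.sum_const, Finset.card_univ,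
      Fintype.card_fin, nsmul_eq_mul]
    field_simp
    ring
  -- log barrier of z
  have hzlog : logBarrier z - (d:ℝ)*Real.log d ≤ (d:ℝ) * Real.log T := by
    have hlog1 : ∀ k : Fin d, Real.log (1/((T:ℝ)*d)) ≤ Real.log (z k) := fun k =>
      Real.log_le_log (by positivity) (hzlow k)
    have hsum : (d:ℝ) * Real.log (1/((T:ℝ)*d)) ≤ ∑ k, Real.log (z k) := by
      calc (d:ℝ) * Real.log (1/((T:ℝ)*d)) = ∑ _k : Fin d, Real.log (1/((T:ℝ)*d)) := by
            rw [Finset.sum_const, Finset.card_univ, Fintype.card_fin, nsmul_eq_mul]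
        _ ≤ ∑ k, Real.log (z k) := Finset.sum_le_sum fun k _ => hlog1 k
    have hinv : Real.log (1/((T:ℝ)*d)) = -(Real.log T + Real.log d) := by
      rw [one_div, Real.log_inv, Real.log_mul (ne_of_gt hTR0) (ne_of_gt hdR)]
    have hre : (d:ℝ)*(Real.log (T:ℝ) + Real.log (d:ℝ))
        = (d:ℝ)*Real.log T + (d:ℝ)*Real.log d := by ring
    rw [logBarrier] at *
    rw [hinv] at hsum
    nlinarith [hsum, hre]
  -- cumulative losses and potential
  set g : ℕ → Fin d → ℝ := fun t => ∑ s ∈ Finset.Icc 1 (t-1), ℓ s with hgdef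
  set A : ℕ → ℝ := fun t => inp (x t) (g t) + (logBarrier (x t) - (d:ℝ)*Real.log d)/η t
    with hAdef
  clear_value g A
  -- per-step bound
  have hstep : ∀ t ∈ Finset.Icc 1 T, inp (x t) (ℓ t) + A t - A (t+1)
      ≤ 4*(η t * dualLocNorm (x t) (ℓ t - mp t)^2)
        - (1/(16*η t))*locNorm (x t) (x (t+1) - x t)^2 := by
    intro t ht
    rw [Finset.mem_Icc] at ht
    have ht1 : t ∈ Finset.Icc 1 (T+1) := Finset.mem_Icc.mpr ⟨ht.1, by omega⟩
    have ht2 : t+1 ∈ Finset.Icc 1 (T+1) := Finset.mem_Icc.mpr ⟨by omega, by omega⟩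
    obtain ⟨hxt_s, hxt_p, hxt_min⟩ := hx t ht1
    obtain ⟨hxt1_s, hxt1_p, -⟩ := hx (t+1) ht2
    have hg1 : g (t+1) = g t + ℓ t := by
      simp only [hgdef]
      have h' : t - 1 + 1 = t := by omega
      rw [Nat.add_sub_cancel, ← h', Finset.sum_Icc_succ_top (by omega : 1 ≤ t - 1 + 1), h']
    have hmin' : ∀ w ∈ simplex d, (∀ k, 0 < w k) →
        inp (x t) (mp t + g t) + logBarrier (x t)/η t
          ≤ inp w (mp t + g t) + logBarrier w/η t := by
      simp only [hgdef]
      exact hxt_min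
    have hstab' : locNorm (x t) (x (t+1) - x t) ≤ 1/2 := hstab t (Finset.mem_Icc.mpr ht)
    have hms := my_step hd0 (η t) (η (t+1)) (hηpos t ht1) (hηpos (t+1) ht2)
      (hηmono t (Finset.mem_Icc.mpr ht)) (g t) (ℓ t) (mp t) (x t) (x (t+1))
      hxt_s hxt_p hxt1_s hxt1_p hmin' hstab'
    simp only [hAdef]
    rw [hg1]
    exact hms
  have hsum := Finset.sum_le_sum hstep
  have htel : ∑ t ∈ Finset.Icc 1 T, (inp (x t) (ℓ t) + A t - A (t+1))
      = (∑ t ∈ Finset.Icc 1 T, inp (x t) (ℓ t)) + (A 1 - A (T+1)) := by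
    have he : ∀ t, inp (x t) (ℓ t) + A t - A (t+1)
        = inp (x t) (ℓ t) + (A t - A (t+1)) := fun t => by ring
    simp only [he]
    rw [Finset.sum_add_distrib, my_telescope]
  -- A 1 nonnegative
  have h1T1 : 1 ∈ Finset.Icc 1 (T+1) := Finset.mem_Icc.mpr ⟨le_refl 1, by omega⟩
  have hA1 : 0 ≤ A 1 := by
    obtain ⟨hs1, hp1, -⟩ := hx 1 h1T1
    have hgz : g 1 = 0 := by simp [hgdef]
    have hA1e : A 1 = (logBarrier (x 1) - (d:ℝ)*Real.log d)/η 1 := by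
      simp only [hAdef, hgz]
      simp [inp]
    rw [hA1e]
    exact div_nonneg (by linarith [my_logBarrier_ge hd0 (x 1) hs1 hp1]) (hηpos 1 h1T1).le
  -- A (T+1) upper bound via the comparator
  have hT1mem : T+1 ∈ Finset.Icc 1 (T+1) := Finset.mem_Icc.mpr ⟨by omega, le_refl _⟩
  obtain ⟨hxT_s, hxT_p, hxT_min⟩ := hx (T+1) hT1mem
  have hATp : A (T+1) ≤ (∑ t ∈ Finset.Icc 1 T, inp z (ℓ t))
      + (logBarrier z - (d:ℝ)*Real.log d)/η (T+1) + 2*L := by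
    have hmin := hxT_min z hzs hz1
    have hgT : (∑ s ∈ Finset.Icc 1 (T+1-1), ℓ s) = g (T+1) := by simp [hgdef]
    rw [hgT] at hmin
    have e1 : inp (x (T+1)) (mp (T+1) + g (T+1))
        = inp (x (T+1)) (mp (T+1)) + inp (x (T+1)) (g (T+1)) := by
      rw [← my_inp_add_right]
    have e2 : inp z (mp (T+1) + g (T+1)) = inp z (mp (T+1)) + inp z (g (T+1)) := by
      rw [← my_inp_add_right]
    have e3 : inp (z - x (T+1)) (mp (T+1)) ≤ 2*L := by
      have hb := my_inp_le (z - x (T+1)) (mp (T+1)) L (hLm (T+1) hT1mem)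
      have habs : ∑ k, |(z - x (T+1)) k| ≤ 2 := by
        have hterm : ∀ k : Fin d, |(z - x (T+1)) k| ≤ z k + x (T+1) k := by
          intro k
          rw [Pi.sub_apply, abs_le]
          constructor <;> linarith [hz1 k, hxT_p k]
        calc ∑ k, |(z - x (T+1)) k| ≤ ∑ k, (z k + x (T+1) k) :=
              Finset.sum_le_sum fun k _ => hterm k
          _ = 2 := by rw [Finset.sum_add_distrib, hzs.2, hxT_s.2]; norm_num
      calc inp (z - x (T+1)) (mp (T+1)) ≤ (∑ k, |(z - x (T+1)) k|) * L := hb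
        _ ≤ 2*L := mul_le_mul_of_nonneg_right habs hL0
    have e4 : inp z (g (T+1)) = ∑ t ∈ Finset.Icc 1 T, inp z (ℓ t) := by
      simp only [hgdef, Nat.add_sub_cancel]
      exact my_inp_sum_right z _ ℓ
    have e5 : inp (z - x (T+1)) (mp (T+1))
        = inp z (mp (T+1)) - inp (x (T+1)) (mp (T+1)) := my_inp_sub_left _ _ _
    have ed1 : (logBarrier (x (T+1)) - (d:ℝ)*Real.log d)/η (T+1)
        = logBarrier (x (T+1))/η (T+1) - ((d:ℝ)*Real.log d)/η (T+1) := sub_div _ _ _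
    have ed2 : (logBarrier z - (d:ℝ)*Real.log d)/η (T+1)
        = logBarrier z/η (T+1) - ((d:ℝ)*Real.log d)/η (T+1) := sub_div _ _ _
    simp only [hAdef]
    rw [← e4]
    linarith [hmin, e1, e2, e3, e5, ed1, ed2]
  -- combine
  have hlog2 : (logBarrier z - (d:ℝ)*Real.log d)/η (T+1) ≤ (d:ℝ)*Real.log T/η (T+1) := by
    have hη := hηpos (T+1) hT1mem
    exact div_le_div_of_nonneg_right hzlog hη.le
  have main : ∑ t ∈ Finset.Icc 1 T, inp (x t) (ℓ t)
      ≤ (∑ t ∈ Finset.Icc 1 T, inp z (ℓ t)) + (d:ℝ)*Real.log T/η (T+1) + 2*L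
        + ∑ t ∈ Finset.Icc 1 T, (4*(η t * dualLocNorm (x t) (ℓ t - mp t)^2)
          - (1/(16*η t))*locNorm (x t) (x (t+1) - x t)^2) := by
    rw [htel] at hsum
    have t1 : ∑ t ∈ Finset.Icc 1 T, inp (x t) (ℓ t)
        ≤ (∑ t ∈ Finset.Icc 1 T, (4*(η t * dualLocNorm (x t) (ℓ t - mp t)^2)
          - (1/(16*η t))*locNorm (x t) (x (t+1) - x t)^2)) - (A 1 - A (T+1)) := by
      linarith [hsum]
    linarith [t1, hA1, hATp, hlog2]
  -- comparator swap
  have hfin2 : ∀ t ∈ Finset.Icc 1 T, inp (z - xs) (ℓ t) ≤ 2*L/T := by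
    intro t ht
    have hb := my_inp_le (z - xs) (ℓ t) L (hLl t ht)
    have habs : ∑ k, |(z - xs) k| ≤ 2/(T:ℝ) := by
      have hterm : ∀ k : Fin d, |(z - xs) k| ≤ (1/(T:ℝ)) * xs k + 1/((T:ℝ)*d) := by
        intro k
        have h1 : 0 ≤ (1/(T:ℝ)) * xs k := mul_nonneg (by positivity) (hxs.1 k)
        have h2 : (0:ℝ) ≤ 1/((T:ℝ)*d) := by positivity
        have h3 : (1 - 1/(T:ℝ))*xs k = xs k - (1/(T:ℝ))*xs k := by ring
        simp only [hzdef, Pi.sub_apply]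
        rw [abs_le]
        constructor <;> nlinarith [h1, h2, h3]
      calc ∑ k, |(z - xs) k| ≤ ∑ k, ((1/(T:ℝ)) * xs k + 1/((T:ℝ)*d)) :=
            Finset.sum_le_sum fun k _ => hterm k
        _ = 2/(T:ℝ) := by
            rw [Finset.sum_add_distrib, ← Finset.mul_sum, hxs.2, Finset.sum_const,
              Finset.card_univ, Fintype.card_fin, nsmul_eq_mul]
            field_simp
            ring
    calc inp (z - xs) (ℓ t) ≤ (∑ k, |(z - xs) k|) * L := hb
      _ ≤ (2/(T:ℝ))*L := mul_le_mul_of_nonneg_right habs hL0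
      _ = 2*L/T := by ring
  have hfin3 : ∑ t ∈ Finset.Icc 1 T, inp (z - xs) (ℓ t) ≤ 2*L := by
    calc ∑ t ∈ Finset.Icc 1 T, inp (z - xs) (ℓ t) ≤ ∑ _t ∈ Finset.Icc 1 T, 2*L/(T:ℝ) :=
          Finset.sum_le_sum hfin2
      _ = (T:ℝ)*(2*L/(T:ℝ)) := by
          rw [Finset.sum_const, Nat.card_Icc, Nat.add_sub_cancel, nsmul_eq_mul]
      _ = 2*L := by field_simp
  have hdecomp : ∑ t ∈ Finset.Icc 1 T, inp (x t - xs) (ℓ t)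
      = (∑ t ∈ Finset.Icc 1 T, inp (x t) (ℓ t)) - (∑ t ∈ Finset.Icc 1 T, inp z (ℓ t))
        + ∑ t ∈ Finset.Icc 1 T, inp (z - xs) (ℓ t) := by
    rw [← Finset.sum_sub_distrib, ← Finset.sum_add_distrib]
    refine Finset.sum_congr rfl fun t _ => ?_
    rw [my_inp_sub_left, my_inp_sub_left]
    ring
  have hsplit2 : ∑ t ∈ Finset.Icc 1 T, (4*(η t * dualLocNorm (x t) (ℓ t - mp t)^2)
        - (1/(16*η t))*locNorm (x t) (x (t+1) - x t)^2)
      = 4*(∑ t ∈ Finset.Icc 1 T, η t * dualLocNorm (x t) (ℓ t - mp t)^2)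
        - ∑ t ∈ Finset.Icc 1 T, (1/(16*η t))*locNorm (x t) (x (t+1) - x t)^2 := by
    rw [Finset.sum_sub_distrib, Finset.mul_sum]
  rw [hdecomp]
  linarith [main, hfin3, hsplit2, hL0]
end
end
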